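/- arXiv:2108.03748 — 9 statements merged into one kernel-verified Lean document; each statement's English description precedes it below -/
import Mathlib

section
/- Let M and N be right modules over a ring S, let E = End_S(N), and suppose sr(E) = 1. Let f : M → N be S-linear. Then the left E-submodule Ef of Hom_S(M,N) contains a split surjection if and only if f itself is a split surjection (i.e., there exists an S-linear g : N → M with f ∘ g = id_N). -/
/-- If E = End_S(N) has stable rank 1, then Ef contains a split surjection
iff f is a split surjection. -/
theorem split_in_Ef_iff_split (S : Type*) [Ring S]
    (M N : Type*) [AddCommGroup M] [Module S M] [AddCommGroup N] [Module S N]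
    (hsr1 : ∀ a b : Module.End S N, (∃ x y : Module.End S N, x * a + y * b = 1) →
      ∃ c : Module.End S N, IsUnit (a + c * b))
    (f : M →ₗ[S] N) :
    (∃ (e : Module.End S N) (g : N →ₗ[S] M), (e ∘ₗ f) ∘ₗ g = LinearMap.id) ↔
      ∃ g : N →ₗ[S] M, f ∘ₗ g = LinearMap.id := by
  constructor
  · rintro ⟨e, g, hg⟩
    have h1 : e * (f ∘ₗ g) = 1 := by
      ext x
      have := LinearMap.congr_fun hg x
      simpa using this
    obtain ⟨c, hc⟩ := hsr1 (f ∘ₗ g) 0 ⟨e, 0, by simp [h1]⟩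
    simp only [mul_zero, add_zero] at hc
    obtain ⟨u, hu⟩ := hc
    refine ⟨g ∘ₗ (↑u⁻¹ : Module.End S N), ?_⟩
    ext x
    have h2 : ((u : Module.End S N) * ↑u⁻¹) = 1 := u.mul_inv
    have : (f ∘ₗ g) ((↑u⁻¹ : Module.End S N) x) = x := by
      rw [← hu]
      calc ((u : Module.End S N)) ((↑u⁻¹ : Module.End S N) x)
          = (((u : Module.End S N) * ↑u⁻¹)) x := rfl
        _ = x := by rw [h2]; rfl
    simpa using this
  · rintro ⟨g, hg⟩
    exact ⟨1, g, by rw [show (1 : Module.End S N) = LinearMap.id from rfl]; simpa using hg⟩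
end

section
/- Every unit-regular ring has stable rank 1. -/
/-- Every unit-regular ring has stable rank 1. -/
theorem unitRegular_stableRankOne (E : Type*) [Ring E]
    (hur : ∀ a : E, ∃ u : Eˣ, a = a * u * a) :
    ∀ a b : E, (∃ x y : E, x * a + y * b = 1) → ∃ c : E, IsUnit (a + c * b) := by
  intro a b ⟨x, y, hxy⟩
  obtain ⟨u, hu⟩ := hur a
  set e : E := (u : E) * a with he
  have hae : a * e = a := by
    rw [he, ← mul_assoc, ← hu]
  have hee : e * e = e := by
    calc e * e = (u : E) * (a * (u : E) * a) := by rw [he]; noncomm_ring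
      _ = e := by rw [← hu]
  have haue : (u⁻¹ : Eˣ) * e = a := by
    rw [he, ← mul_assoc]
    simp
  have h1 : y * b * (1 - e) = 1 - e := by
    have h0 : a * (1 - e) = 0 := by rw [mul_sub, hae, mul_one, sub_self]
    have h := congrArg (· * (1 - e)) hxy
    simp only [add_mul, one_mul] at h
    rw [mul_assoc x a, h0, mul_zero, zero_add] at h
    exact h
  set n : E := (1 - e) * (y * b) * e with hn
  have hnn : n * n = 0 := by
    have he0 : e * (1 - e) = 0 := by rw [mul_sub, hee, mul_one, sub_self]
    calc n * n = (1 - e) * (y * b) * (e * (1 - e)) * (y * b) * e := by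
          rw [hn]; noncomm_ring
      _ = 0 := by rw [he0]; noncomm_ring
  have hv1 : (1 + n) * (1 - n) = 1 := by
    have : (1 + n) * (1 - n) = 1 - n * n := by noncomm_ring
    rw [this, hnn, sub_zero]
  have hv2 : (1 - n) * (1 + n) = 1 := by
    have : (1 - n) * (1 + n) = 1 - n * n := by noncomm_ring
    rw [this, hnn, sub_zero]
  set V : Eˣ := ⟨1 + n, 1 - n, hv1, hv2⟩ with hV
  refine ⟨(u⁻¹ : Eˣ) * ((1 - e) * y), ?_⟩
  have h2 : (1 - e) * (y * b) = n + (1 - e) := by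
    have hsplit : (1 - e) * (y * b) = (1 - e) * (y * b) * e + (1 - e) * (y * b * (1 - e)) := by
      noncomm_ring
    have hsub : (1 - e) * (1 - e) = 1 - e := by
      have : (1 - e) * (1 - e) = 1 - e - (e - e * e) := by noncomm_ring
      rw [this, hee, sub_self, sub_zero]
    rw [hsplit, h1, hsub, hn]
  have key : a + ((u⁻¹ : Eˣ) * ((1 - e) * y)) * b = (u⁻¹ * V : Eˣ) := by
    have hstep : ((u⁻¹ : Eˣ) : E) * ((1 - e) * y) * b = ((u⁻¹ : Eˣ) : E) * ((1 - e) * (y * b)) := by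
      noncomm_ring
    rw [hstep, h2, ← haue]
    show ((u⁻¹ : Eˣ) : E) * e + ((u⁻¹ : Eˣ) : E) * (n + (1 - e)) = ((u⁻¹ : Eˣ) : E) * (1 + n)
    noncomm_ring
  rw [key]
  exact (u⁻¹ * V).isUnit
end

section
/- Let E be a unit-regular ring and let a, b, c ∈ E satisfy aE + bE = E = Eb + Ec. Then there exists d ∈ E such that, for every central unit s of E, the element b + a·d·s·c is a unit of E. -/
/-- Lemma: in a unit-regular ring, if aE + bE = E = Eb + Ec, then there is d such
that b + a*d*s*c is a unit for every central unit s. -/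
theorem unitRegular_unit_perturbation (E : Type*) [Ring E]
    (hur : ∀ x : E, ∃ v : Eˣ, x = x * v * x)
    (a b c : E)
    (h1 : ∃ e f : E, a * e + b * f = 1)
    (h2 : ∃ g h : E, g * b + h * c = 1) :
    ∃ d : E, ∀ s : E, IsUnit s → s ∈ Set.center E → IsUnit (b + a * d * s * c) := by
  obtain ⟨w, hw⟩ := hur b
  obtain ⟨x, y, hxy⟩ := h1
  obtain ⟨g, h, hgh⟩ := h2
  obtain ⟨wi, hwi⟩ : ∃ t : E, t = (↑w⁻¹ : E) := ⟨_, rfl⟩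
  obtain ⟨e, he⟩ : ∃ t : E, t = b * w := ⟨_, rfl⟩
  obtain ⟨f, hf⟩ : ∃ t : E, t = (w : E) * b := ⟨_, rfl⟩
  -- basic identities
  have hwwi : (w : E) * wi = 1 := by rw [hwi]; exact w.mul_inv
  have hwiw : wi * (w : E) = 1 := by rw [hwi]; exact w.inv_mul
  have heb : e * b = b := by rw [he, mul_assoc]; rw [← mul_assoc]; exact hw.symm
  have hbf : b * f = b := by rw [hf, ← mul_assoc]; exact hw.symm
  have hee : e * e = e := by
    rw [he]
    calc (b * (w:E)) * (b * (w:E)) = (b * (w:E) * b) * (w:E) := by noncomm_ring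
      _ = b * (w:E) := by rw [← hw]
  have hff : f * f = f := by
    rw [hf]
    calc ((w:E) * b) * ((w:E) * b) = (w:E) * (b * (w:E) * b) := by noncomm_ring
      _ = (w:E) * b := by rw [← hw]
  have hewi : e * wi = b := by rw [he, mul_assoc, hwwi, mul_one]
  have hwif : wi * f = b := by rw [hf, ← mul_assoc, hwiw, one_mul]
  have hbf0 : b * (1 - f) = 0 := by rw [mul_sub, mul_one, hbf, sub_self]
  have heb0 : (1 - e) * b = 0 := by rw [sub_mul, one_mul, heb, sub_self]
  have h1e : (1 - e) * (1 - e) = 1 - e := by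
    rw [sub_mul, mul_sub, mul_sub, one_mul, mul_one, one_mul, hee]; noncomm_ring
  have h1f : (1 - f) * (1 - f) = 1 - f := by
    rw [sub_mul, mul_sub, mul_sub, one_mul, mul_one, one_mul, hff]; noncomm_ring
  -- h*c*(1-f) = 1-f
  have hcf : h * c * (1 - f) = 1 - f := by
    have := congrArg (· * (1 - f)) hgh
    simp only [add_mul, one_mul] at this
    rwa [mul_assoc g b (1-f), hbf0, mul_zero, zero_add] at this
  -- (1-e)*(a*x) = 1-e
  have hax : (1 - e) * (a * x) = 1 - e := by
    have := congrArg ((1 - e) * ·) hxy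
    simp only [mul_add, mul_one] at this
    rwa [← mul_assoc (1-e) b y, heb0, zero_mul, add_zero] at this
  refine ⟨x * (1 - e) * wi * h, ?_⟩
  intro s hs hsc
  obtain ⟨su, hsu⟩ := hs
  obtain ⟨s', hs'⟩ : ∃ t : E, t = (↑su⁻¹ : E) := ⟨_, rfl⟩
  have hss' : s * s' = 1 := by rw [hs', ← hsu]; exact su.mul_inv
  have hs's : s' * s = 1 := by rw [hs', ← hsu]; exact su.inv_mul
  have hscomm : ∀ t : E, s * t = t * s := fun t => (Set.mem_center_iff.mp hsc).comm t
  have hs'comm : ∀ t : E, s' * t = t * s' := by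
    intro t
    calc s' * t = s' * (t * (s * s')) := by rw [hss', mul_one]
      _ = s' * ((t * s) * s') := by rw [mul_assoc]
      _ = s' * ((s * t) * s') := by rw [hscomm]
      _ = (s' * s) * (t * s') := by noncomm_ring
      _ = t * s' := by rw [hs's, one_mul]
  -- the main unit v and its triangular inverses
  obtain ⟨v, hv⟩ : ∃ t : E, t = b + (1 - e) * wi * s * (h * c) := ⟨_, rfl⟩
  obtain ⟨z, hz⟩ : ∃ t : E, t = (w : E) * e + s' * (1 - f) * (w : E) := ⟨_, rfl⟩
  obtain ⟨N, hN⟩ : ∃ t : E, t = (1 - f) * (h * c) * f := ⟨_, rfl⟩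
  obtain ⟨M, hM⟩ : ∃ t : E, t = (1 - e) * (wi * s * (h * c) * (w : E)) * e := ⟨_, rfl⟩
  have hNsq : N * N = 0 := by
    have h0 : f * (1 - f) = 0 := by rw [mul_sub, mul_one, hff, sub_self]
    rw [hN]
    calc ((1-f) * (h*c) * f) * ((1-f) * (h*c) * f)
        = (1-f) * (h*c) * (f * (1-f)) * ((h*c) * f) := by noncomm_ring
      _ = 0 := by rw [h0, mul_zero, zero_mul]
  have hMsq : M * M = 0 := by
    have h0 : e * (1 - e) = 0 := by rw [mul_sub, mul_one, hee, sub_self]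
    rw [hM]
    calc ((1-e) * (wi*s*(h*c)*(w:E)) * e) * ((1-e) * (wi*s*(h*c)*(w:E)) * e)
        = (1-e) * (wi*s*(h*c)*(w:E)) * (e * (1-e)) * ((wi*s*(h*c)*(w:E)) * e) := by noncomm_ring
      _ = 0 := by rw [h0, mul_zero, zero_mul]
  have hzv : z * v = 1 + N := by
    have t1 : (w : E) * e * b = f := by rw [mul_assoc, heb, hf]
    have t2 : (w : E) * e * ((1 - e) * wi * s * (h * c)) = 0 := by
      have h0 : (w : E) * e * (1 - e) = 0 := by
        rw [mul_sub, mul_one, mul_assoc, hee, sub_self]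
      calc (w : E) * e * ((1 - e) * wi * s * (h * c))
          = ((w : E) * e * (1 - e)) * (wi * s * (h * c)) := by noncomm_ring
        _ = 0 := by rw [h0, zero_mul]
    have t3 : s' * (1 - f) * (w : E) * b = 0 := by
      have h0 : (1 - f) * f = 0 := by rw [sub_mul, one_mul, hff, sub_self]
      calc s' * (1 - f) * (w : E) * b = s' * ((1 - f) * ((w : E) * b)) := by noncomm_ring
        _ = s' * ((1 - f) * f) := by rw [← hf]
        _ = 0 := by rw [h0, mul_zero]
    have t4 : s' * (1 - f) * (w : E) * ((1 - e) * wi * s * (h * c)) = (1 - f) * (h * c) := by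
      have hwe : (w : E) * ((1 - e) * wi) = 1 - f := by
        calc (w : E) * ((1 - e) * wi) = (w:E) * wi - (w:E) * (e * wi) := by noncomm_ring
          _ = 1 - (w:E) * b := by rw [hwwi, hewi]
          _ = 1 - f := by rw [hf]
      have hkey : (1 - f) * ((w : E) * ((1 - e) * wi)) = 1 - f := by rw [hwe, h1f]
      calc s' * (1 - f) * (w : E) * ((1 - e) * wi * s * (h * c))
          = s' * ((1 - f) * ((w : E) * ((1 - e) * wi))) * (s * (h * c)) := by noncomm_ring
        _ = s' * (1 - f) * (s * (h * c)) := by rw [hkey]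
        _ = s' * ((1 - f) * s) * (h * c) := by noncomm_ring
        _ = s' * (s * (1 - f)) * (h * c) := by rw [← hscomm]
        _ = (s' * s) * ((1 - f) * (h * c)) := by noncomm_ring
        _ = (1 - f) * (h * c) := by rw [hs's, one_mul]
    have expand : z * v = (w : E) * e * b + (w : E) * e * ((1 - e) * wi * s * (h * c))
        + s' * (1 - f) * (w : E) * b
        + s' * (1 - f) * (w : E) * ((1 - e) * wi * s * (h * c)) := by
      rw [hz, hv]; noncomm_ring
    rw [expand, t1, t2, t3, t4, add_zero, add_zero]
    have hsplit : (1 - f) * (h * c) = N + (1 - f) := by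
      calc (1 - f) * (h * c)
          = (1 - f) * (h * c) * f + (1 - f) * (h * c * (1 - f)) := by noncomm_ring
        _ = (1 - f) * (h * c) * f + (1 - f) * (1 - f) := by rw [hcf]
        _ = N + (1 - f) := by rw [h1f, hN]
    rw [hsplit]; noncomm_ring
  have hvz : v * z = 1 + M := by
    have t1 : b * ((w : E) * e) = e := by rw [← mul_assoc, ← he, hee]
    have t2 : b * (s' * (1 - f) * (w : E)) = 0 := by
      calc b * (s' * (1 - f) * (w : E)) = (b * s') * ((1 - f) * (w : E)) := by noncomm_ring
        _ = (s' * b) * ((1 - f) * (w : E)) := by rw [← hs'comm]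
        _ = s' * (b * (1 - f)) * (w : E) := by noncomm_ring
        _ = 0 := by rw [hbf0, mul_zero, zero_mul]
    have t3 : (1 - e) * wi * s * (h * c) * ((w : E) * e) = M := by
      rw [hM]; noncomm_ring
    have t4 : (1 - e) * wi * s * (h * c) * (s' * (1 - f) * (w : E)) = 1 - e := by
      have hwi1f : wi * (1 - f) = (1 - e) * wi := by
        rw [mul_sub, mul_one, hwif, sub_mul, one_mul, hewi]
      calc (1 - e) * wi * s * (h * c) * (s' * (1 - f) * (w : E))
          = (1 - e) * wi * s * ((h * c) * s') * ((1 - f) * (w : E)) := by noncomm_ring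
        _ = (1 - e) * wi * s * (s' * (h * c)) * ((1 - f) * (w : E)) := by rw [← hs'comm]
        _ = (1 - e) * wi * (s * s') * ((h * c) * (1 - f)) * (w : E) := by noncomm_ring
        _ = (1 - e) * wi * (1 - f) * (w : E) := by rw [hss', hcf, mul_one]
        _ = (1 - e) * ((1 - e) * wi) * (w : E) := by rw [mul_assoc (1-e) wi (1-f), hwi1f]
        _ = ((1 - e) * (1 - e)) * (wi * (w : E)) := by noncomm_ring
        _ = (1 - e) * (wi * (w : E)) := by rw [h1e]
        _ = 1 - e := by rw [hwiw, mul_one]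
    have expand : v * z = b * ((w : E) * e) + b * (s' * (1 - f) * (w : E))
        + (1 - e) * wi * s * (h * c) * ((w : E) * e)
        + (1 - e) * wi * s * (h * c) * (s' * (1 - f) * (w : E)) := by
      rw [hz, hv]; noncomm_ring
    rw [expand, t1, t2, t3, t4, add_zero]; noncomm_ring
  -- v is a unit
  have hvunit : IsUnit v := by
    have hL : ((1 - N) * z) * v = 1 := by
      rw [mul_assoc, hzv]
      calc (1 - N) * (1 + N) = 1 - N * N := by noncomm_ring
        _ = 1 := by rw [hNsq, sub_zero]
    have hR : v * (z * (1 - M)) = 1 := by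
      rw [← mul_assoc, hvz]
      calc (1 + M) * (1 - M) = 1 - M * M := by noncomm_ring
        _ = 1 := by rw [hMsq, sub_zero]
    have hLR : (1 - N) * z = z * (1 - M) := by
      calc (1 - N) * z = ((1 - N) * z) * (v * (z * (1 - M))) := by rw [hR, mul_one]
        _ = (((1 - N) * z) * v) * (z * (1 - M)) := by noncomm_ring
        _ = z * (1 - M) := by rw [hL, one_mul]
    exact isUnit_iff_exists.mpr ⟨(1 - N) * z, by rw [hLR]; exact hR, hL⟩
  -- the target equals (1 + e*(a*x)*(1-e)) * v
  obtain ⟨n, hn⟩ : ∃ t : E, t = e * (a * x) * (1 - e) := ⟨_, rfl⟩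
  have hnsq : n * n = 0 := by
    have h0 : (1 - e) * e = 0 := by rw [sub_mul, one_mul, hee, sub_self]
    rw [hn]
    calc (e * (a*x) * (1-e)) * (e * (a*x) * (1-e))
        = e * (a*x) * ((1-e) * e) * ((a*x) * (1-e)) := by noncomm_ring
      _ = 0 := by rw [h0, mul_zero, zero_mul]
  have hnunit : IsUnit (1 + n) := by
    refine isUnit_iff_exists.mpr ⟨1 - n, ?_, ?_⟩
    · calc (1 + n) * (1 - n) = 1 - n * n := by noncomm_ring
        _ = 1 := by rw [hnsq, sub_zero]
    · calc (1 - n) * (1 + n) = 1 - n * n := by noncomm_ring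
        _ = 1 := by rw [hnsq, sub_zero]
  have hTeq : b + a * (x * (1 - e) * wi * h) * s * c = (1 + n) * v := by
    have haxsplit : a * x * (1 - e) = n + (1 - e) := by
      have h0 : (1 - e) * (a * x) * (1 - e) = 1 - e := by rw [hax, h1e]
      rw [hn]
      calc a * x * (1 - e) = e * (a*x) * (1-e) + (1 - e) * (a*x) * (1-e) := by noncomm_ring
        _ = e * (a*x) * (1-e) + (1 - e) := by rw [h0]
    have lhs_eq : b + a * (x * (1 - e) * wi * h) * s * c
        = b + (a * x * (1 - e)) * (wi * s * (h * c)) := by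
      have step : a * (x * (1 - e) * wi * h) * s * c
          = (a * x * (1 - e)) * (wi * ((h * s) * c)) := by noncomm_ring
      rw [step, ← hscomm h]
      noncomm_ring
    rw [lhs_eq, haxsplit, hv]
    have hnb : n * b = 0 := by
      rw [hn]
      calc e * (a*x) * (1-e) * b = e * (a*x) * ((1-e) * b) := by rw [mul_assoc]
        _ = 0 := by rw [heb0, mul_zero]
    have hn1e : n * (1 - e) = n := by
      rw [hn]
      calc e * (a * x) * (1 - e) * (1 - e)
          = e * (a * x) * ((1 - e) * (1 - e)) := by noncomm_ring
        _ = e * (a * x) * (1 - e) := by rw [h1e]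
    calc b + (n + (1 - e)) * (wi * s * (h * c))
        = (b + (1 - e) * wi * s * (h * c)) + n * (wi * s * (h * c)) := by noncomm_ring
      _ = (1 + n) * (b + (1 - e) * wi * s * (h * c)) := by
          have expand : (1 + n) * (b + (1 - e) * wi * s * (h * c))
              = (b + (1 - e) * wi * s * (h * c)) + n * b
                + (n * (1 - e)) * (wi * s * (h * c)) := by noncomm_ring
          rw [expand, hnb, add_zero, hn1e]
  rw [hTeq]
  exact hnunit.mul hvunit
end

section
/- Let E be a ring such that E/Jac(E) is unit-regular, and let a, b, c ∈ E satisfy aE + bE = E = Eb + Ec. Then there exists d ∈ E such that, for every central unit s of E, the element b + a·d·s·c is a unit of E. -/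
section AuxJ
variable {E : Type*} [Ring E]

/-- membership criterion for the Jacobson radical -/
def InJ (x : E) : Prop := ∀ y : E, IsUnit (1 - y * x)

lemma isUnit_one_sub_swap {x y : E} (h : IsUnit (1 - x * y)) : IsUnit (1 - y * x) := by
  obtain ⟨u, hu⟩ := h
  have h1 : (1 - x * y) * ↑u⁻¹ = 1 := by rw [← hu]; exact u.mul_inv
  have h2 : (↑u⁻¹ : E) * (1 - x * y) = 1 := by rw [← hu]; exact u.inv_mul
  refine ⟨⟨1 - y * x, 1 + y * ↑u⁻¹ * x, ?_, ?_⟩, rfl⟩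
  · have e : (1 - y * x) * (1 + y * ↑u⁻¹ * x)
        = 1 + y * ((1 - x * y) * ↑u⁻¹) * x - y * x := by noncomm_ring
    rw [e, h1]; noncomm_ring
  · have e : (1 + y * ↑u⁻¹ * x) * (1 - y * x)
        = 1 + y * (↑u⁻¹ * (1 - x * y)) * x - y * x := by noncomm_ring
    rw [e, h2]; noncomm_ring

lemma InJ.zero : InJ (0 : E) := fun y => by simp

lemma InJ.neg {x : E} (hx : InJ x) : InJ (-x) := by
  intro y
  have h := hx (-y)
  have e : 1 - -y * x = 1 - y * -x := by noncomm_ring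
  rwa [e] at h

lemma InJ.add {x y : E} (hx : InJ x) (hy : InJ y) : InJ (x + y) := by
  intro z
  obtain ⟨u, hu⟩ := hx z
  have h2 := hy (↑u⁻¹ * z)
  have hc : (↑u : E) * ↑u⁻¹ = 1 := u.mul_inv
  have e : (1 : E) - z * (x + y) = ↑u * (1 - ↑u⁻¹ * z * y) := by
    calc (1 : E) - z * (x + y) = (1 - z * x) - z * y := by noncomm_ring
      _ = ↑u - (↑u * ↑u⁻¹) * (z * y) := by rw [← hu, hc, one_mul]
      _ = ↑u * (1 - ↑u⁻¹ * z * y) := by noncomm_ring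
  rw [e]
  exact u.isUnit.mul h2

lemma InJ.mul_left {x : E} (z : E) (hx : InJ x) : InJ (z * x) := by
  intro y
  have h := hx (y * z)
  rwa [mul_assoc] at h

lemma InJ.mul_right {x : E} (z : E) (hx : InJ x) : InJ (x * z) := by
  intro y
  have h := hx (z * y)
  have h' : IsUnit (1 - z * (y * x)) := by rwa [← mul_assoc]
  have h'' := isUnit_one_sub_swap h'
  rwa [mul_assoc] at h''

/-- The congruence modulo the Jacobson radical. -/
def jCon (E : Type*) [Ring E] : RingCon E where
  r x y := InJ (x - y)
  iseqv := by
    refine ⟨fun x => ?_, fun {x y} h => ?_, fun {x y z} h1 h2 => ?_⟩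
    · rw [sub_self]; exact InJ.zero
    · have := h.neg; rwa [neg_sub] at this
    · have := h1.add h2; rwa [sub_add_sub_cancel] at this
  add' {w x y z} h1 h2 := by
    have := h1.add h2
    rwa [sub_add_sub_comm] at this
  mul' {w x y z} h1 h2 := by
    have hA := h1.mul_right z
    have hB := h2.mul_left w
    have e : w * (y - z) + (w - x) * z = w * y - x * z := by noncomm_ring
    have := hB.add hA
    rwa [e] at this

lemma jCon_of_InJ {x y : E} (h : InJ (x - y)) :
    (x : (jCon E).Quotient) = (y : (jCon E).Quotient) :=
  (RingCon.eq _).mpr h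

lemma isUnit_of_jCon {x : E} (h : IsUnit ((x : (jCon E).Quotient))) : IsUnit x := by
  obtain ⟨u, hu⟩ := h
  obtain ⟨y, hy⟩ := Quotient.mk''_surjective (↑u⁻¹ : (jCon E).Quotient)
  have hy' : (y : (jCon E).Quotient) = ↑u⁻¹ := hy
  have hxy : ((x * y : E) : (jCon E).Quotient) = ((1 : E) : (jCon E).Quotient) := by
    rw [RingCon.coe_mul, ← hu, hy', RingCon.coe_one]; exact u.mul_inv
  have hyx : ((y * x : E) : (jCon E).Quotient) = ((1 : E) : (jCon E).Quotient) := by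
    rw [RingCon.coe_mul, ← hu, hy', RingCon.coe_one]; exact u.inv_mul
  have hxyJ : InJ (x * y - 1) := (RingCon.eq _).mp hxy
  have hyxJ : InJ (y * x - 1) := (RingCon.eq _).mp hyx
  have hxyU : IsUnit (x * y) := by
    have := hxyJ (-1)
    have e : 1 - (-1 : E) * (x * y - 1) = x * y := by noncomm_ring
    rwa [e] at this
  have hyxU : IsUnit (y * x) := by
    have := hyxJ (-1)
    have e : 1 - (-1 : E) * (y * x - 1) = y * x := by noncomm_ring
    rwa [e] at this
  obtain ⟨u1, hu1⟩ := hxyU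
  obtain ⟨u2, hu2⟩ := hyxU
  have hr : x * (y * ↑u1⁻¹) = 1 := by
    rw [← mul_assoc, ← hu1]; exact u1.mul_inv
  have hl : (↑u2⁻¹ * y) * x = 1 := by
    rw [mul_assoc, ← hu2]; exact u2.inv_mul
  have hrl : (↑u2⁻¹ * y : E) = y * ↑u1⁻¹ := by
    calc (↑u2⁻¹ * y : E) = (↑u2⁻¹ * y) * (x * (y * ↑u1⁻¹)) := by rw [hr, mul_one]
      _ = ((↑u2⁻¹ * y) * x) * (y * ↑u1⁻¹) := by noncomm_ring
      _ = y * ↑u1⁻¹ := by rw [hl, one_mul]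
  exact ⟨⟨x, y * ↑u1⁻¹, hr, by rw [← hrl]; exact hl⟩, rfl⟩

end AuxJ

private lemma key_unit {R : Type*} [Ring R] (A B C W W' Rr L S S' : R)
    (hWW' : W * W' = 1) (hW'W : W' * W = 1)
    (hSS' : S * S' = 1) (hS'S : S' * S = 1)
    (hS : ∀ x : R, S * x = x * S)
    (hB : B * W * B = B)
    (hAR : (1 - B * W) * (A * Rr) = 1 - B * W)
    (hLC : (L * C) * (1 - W * B) = 1 - W * B) :
    IsUnit (B + A * (Rr * (1 - B * W) * W' * (1 - W * B) * L) * S * C) := by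
  obtain ⟨n, hn⟩ : ∃ n : R, n = 1 - B * W := ⟨_, rfl⟩
  obtain ⟨q, hq⟩ : ∃ q : R, q = 1 - W * B := ⟨_, rfl⟩
  rw [← hn] at hAR ⊢
  rw [← hq] at hLC ⊢
  have hS' : ∀ x : R, S' * x = x * S' := by
    intro x
    have h0 : S' * x = S' * ((x * S) * S') := by rw [mul_assoc, hSS', mul_one]
    rw [h0, ← hS x, ← mul_assoc, ← mul_assoc, hS'S, one_mul]
  have e1 : n * B = 0 := by rw [hn, sub_mul, one_mul, hB, sub_self]
  have e2 : B * q = 0 := by rw [hq, mul_sub, mul_one, ← mul_assoc, hB, sub_self]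
  have e3 : n * n = n := by
    have h : n * n = n - n * B * W := by rw [hn]; noncomm_ring
    rw [h, e1, zero_mul, sub_zero]
  have e4 : q * q = q := by
    have h : q * q = q - W * (B * q) := by rw [hq]; noncomm_ring
    rw [h, e2, mul_zero, sub_zero]
  have e1b : (1 - n) * B = B := by rw [sub_mul, one_mul, e1, sub_zero]
  have e2b : B * (1 - q) = B := by rw [mul_sub, mul_one, e2, sub_zero]
  have e3b : (1 - n) * (1 - n) = 1 - n := by
    have h : (1 - n) * (1 - n) = 1 - n - n + n * n := by noncomm_ring
    rw [h, e3]; noncomm_ring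
  have e4b : (1 - q) * (1 - q) = 1 - q := by
    have h : (1 - q) * (1 - q) = 1 - q - q + q * q := by noncomm_ring
    rw [h, e4]; noncomm_ring
  have hBW : B * W = 1 - n := by rw [hn]; noncomm_ring
  have hWB : W * B = 1 - q := by rw [hq]; noncomm_ring
  have k12 : W' * q * W = n := by
    have h : W' * q * W = W' * W - W' * W * (B * W) := by rw [hq]; noncomm_ring
    rw [h, hW'W, one_mul, ← hn]
  have k13 : W * n * W' = q := by
    have h : W * n * W' = W * W' - W * B * (W * W') := by rw [hn]; noncomm_ring
    rw [h, hWW', mul_one, ← hq]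
  have k1 : n * (A * Rr * n) = n := by
    rw [show n * (A * Rr * n) = (n * (A * Rr)) * n by noncomm_ring, hAR, e3]
  have k2 : (A * Rr * n) * n = A * Rr * n := by rw [mul_assoc, e3]
  have k3 : (A * Rr * n) * (A * Rr * n) = A * Rr * n := by
    rw [show (A * Rr * n) * (A * Rr * n) = (A * Rr) * (n * (A * Rr * n)) by noncomm_ring, k1]
  have k4 : (A * Rr * n) * B = 0 := by rw [mul_assoc, e1, mul_zero]
  have k5 : (A * Rr * n) * (1 - n) = 0 := by rw [mul_sub, mul_one, k2, sub_self]
  have k6 : (q * (L * C)) * q = q := by rw [mul_assoc, hLC, e4]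
  have k7 : q * (q * (L * C)) = q * (L * C) := by rw [← mul_assoc, e4]
  have k8 : (q * (L * C)) * (q * (L * C)) = q * (L * C) := by rw [← mul_assoc, k6]
  have k9 : B * (q * (L * C)) = 0 := by rw [← mul_assoc, e2, zero_mul]
  have k10 : (1 - q) * (q * (L * C)) = 0 := by rw [sub_mul, one_mul, k7, sub_self]
  have k14 : n * (n * W' * q) = n * W' * q := by
    rw [show n * (n * W' * q) = (n * n) * W' * q by noncomm_ring, e3]
  have k15 : (n * W' * q) * q = n * W' * q := by rw [mul_assoc, e4]
  have k16 : (1 - n) * (n * W' * q) = 0 := by rw [sub_mul, one_mul, k14, sub_self]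
  have k17 : (n * W' * q) * (1 - q) = 0 := by rw [mul_sub, mul_one, k15, sub_self]
  -- step 1
  have m1 : (1 - (1 - n) * (A * Rr * n)) * (B + A * Rr * n * (n * W' * q) * (q * (L * C)) * S)
      = B + (n * W' * q) * ((q * (L * C)) * S) := by
    calc (1 - (1 - n) * (A * Rr * n)) * (B + A * Rr * n * (n * W' * q) * (q * (L * C)) * S)
        = B + A * Rr * n * (n * W' * q) * (q * (L * C)) * S - (1 - n) * ((A * Rr * n) * B)
          - (1 - n) * (((A * Rr * n) * (A * Rr * n)) * ((n * W' * q) * ((q * (L * C)) * S))) := by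
          noncomm_ring
      _ = B + A * Rr * n * (n * W' * q) * (q * (L * C)) * S
          - (1 - n) * ((A * Rr * n) * ((n * W' * q) * ((q * (L * C)) * S))) := by
          rw [k4, mul_zero, sub_zero, k3]
      _ = B + (n * ((A * Rr * n) * ((n * W' * q) * ((q * (L * C)) * S)))) := by noncomm_ring
      _ = B + (n * (A * Rr * n)) * ((n * W' * q) * ((q * (L * C)) * S)) := by noncomm_ring
      _ = B + n * ((n * W' * q) * ((q * (L * C)) * S)) := by rw [k1]
      _ = B + (n * (n * W' * q)) * ((q * (L * C)) * S) := by noncomm_ring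
      _ = B + (n * W' * q) * ((q * (L * C)) * S) := by rw [k14]
  -- step 2
  have m2 : (B + (n * W' * q) * ((q * (L * C)) * S)) * (1 - (q * (L * C)) * (1 - q))
      = B + (n * W' * q) * S := by
    calc (B + (n * W' * q) * ((q * (L * C)) * S)) * (1 - (q * (L * C)) * (1 - q))
        = B + (n * W' * q) * ((q * (L * C)) * S) - (B * (q * (L * C))) * (1 - q)
          - (n * W' * q) * ((q * (L * C)) * (S * ((q * (L * C)) * (1 - q)))) := by noncomm_ring
      _ = B + (n * W' * q) * ((q * (L * C)) * S)
          - (n * W' * q) * ((q * (L * C)) * (((q * (L * C)) * (1 - q)) * S)) := by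
          rw [k9, zero_mul, sub_zero, hS ((q * (L * C)) * (1 - q))]
      _ = B + (n * W' * q) * ((q * (L * C)) * S)
          - (n * W' * q) * ((((q * (L * C)) * (q * (L * C))) * (1 - q)) * S) := by noncomm_ring
      _ = B + (n * W' * q) * ((q * (L * C)) * S)
          - (n * W' * q) * (((q * (L * C)) * (1 - q)) * S) := by rw [k8]
      _ = B + (n * W' * q) * (((q * (L * C)) * q) * S) := by noncomm_ring
      _ = B + (n * W' * q) * (q * S) := by rw [k6]
      _ = B + ((n * W' * q) * q) * S := by noncomm_ring
      _ = B + (n * W' * q) * S := by rw [k15]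
  -- the middle term is a unit
  have m3 : (B + (n * W' * q) * S) * ((1 - q) * W * (1 - n) + q * W * n * S') = 1 := by
    calc (B + (n * W' * q) * S) * ((1 - q) * W * (1 - n) + q * W * n * S')
        = (B * (1 - q)) * (W * (1 - n)) + (B * q) * (W * (n * S'))
          + (n * W' * q) * (S * ((1 - q) * W * (1 - n)))
          + (n * W' * q) * (S * ((q * W * n) * S')) := by noncomm_ring
      _ = (B * (1 - q)) * (W * (1 - n)) + 0 * (W * (n * S'))
          + (n * W' * q) * (((1 - q) * W * (1 - n)) * S)
          + (n * W' * q) * (((q * W * n) * S') * S) := by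
          rw [e2, hS ((1 - q) * W * (1 - n)), hS ((q * W * n) * S')]
      _ = (B * (1 - q)) * (W * (1 - n)) + ((n * W' * q) * (1 - q)) * ((W * (1 - n)) * S)
          + (n * W' * q) * ((q * W * n) * (S' * S)) := by noncomm_ring
      _ = (B * (1 - q)) * (W * (1 - n)) + 0 * ((W * (1 - n)) * S)
          + (n * W' * q) * ((q * W * n) * 1) := by rw [k17, hS'S]
      _ = B * (W * (1 - n)) + (n * W') * ((q * q) * (W * n)) := by
          rw [e2b]; noncomm_ring
      _ = B * (W * (1 - n)) + (n * W') * (q * (W * n)) := by rw [e4]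
      _ = (B * W) * (1 - n) + (n * (W' * q * W)) * n := by noncomm_ring
      _ = (1 - n) * (1 - n) + (n * n) * n := by rw [hBW, k12]
      _ = (1 - n) + n := by rw [e3b, e3, e3]
      _ = 1 := by noncomm_ring
  have m4 : ((1 - q) * W * (1 - n) + q * W * n * S') * (B + (n * W' * q) * S) = 1 := by
    calc ((1 - q) * W * (1 - n) + q * W * n * S') * (B + (n * W' * q) * S)
        = ((1 - q) * W) * ((1 - n) * B) + ((1 - q) * W) * (((1 - n) * (n * W' * q)) * S)
          + (q * W * n) * (S' * B) + (q * W * n) * (S' * ((n * W' * q) * S)) := by noncomm_ring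
      _ = ((1 - q) * W) * B + ((1 - q) * W) * (0 * S)
          + (q * W * n) * (B * S') + (q * W * n) * (((n * W' * q) * S) * S') := by
          rw [e1b, k16, hS' B, hS' ((n * W' * q) * S)]
      _ = (1 - q) * (W * B) + ((q * W) * (n * B)) * S'
          + (q * W * n) * ((n * W' * q) * (S * S')) := by noncomm_ring
      _ = (1 - q) * (1 - q) + ((q * W) * 0) * S'
          + (q * W * n) * ((n * W' * q) * 1) := by rw [hWB, e1, hSS']
      _ = (1 - q) * (1 - q) + (q * W) * ((n * n) * (W' * q)) := by
          rw [mul_zero, zero_mul, mul_one]; noncomm_ring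
      _ = (1 - q) * (1 - q) + (q * W) * (n * (W' * q)) := by rw [e3]
      _ = (1 - q) * (1 - q) + (q * (W * n * W')) * q := by noncomm_ring
      _ = (1 - q) + (q * q) * q := by rw [e4b, k13]
      _ = (1 - q) + q := by rw [e4, e4]
      _ = 1 := by noncomm_ring
  -- corner units
  have sq1 : ((1 - n) * (A * Rr * n)) * ((1 - n) * (A * Rr * n)) = 0 := by
    rw [show ((1 - n) * (A * Rr * n)) * ((1 - n) * (A * Rr * n))
        = (1 - n) * (((A * Rr * n) * (1 - n)) * (A * Rr * n)) by noncomm_ring, k5, zero_mul,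
      mul_zero]
  have sq2 : ((q * (L * C)) * (1 - q)) * ((q * (L * C)) * (1 - q)) = 0 := by
    rw [show ((q * (L * C)) * (1 - q)) * ((q * (L * C)) * (1 - q))
        = (q * (L * C)) * (((1 - q) * (q * (L * C))) * (1 - q)) by noncomm_ring, k10, zero_mul,
      mul_zero]
  have m5a : (1 - (1 - n) * (A * Rr * n)) * (1 + (1 - n) * (A * Rr * n)) = 1 := by
    have h : (1 - (1 - n) * (A * Rr * n)) * (1 + (1 - n) * (A * Rr * n))
        = 1 - ((1 - n) * (A * Rr * n)) * ((1 - n) * (A * Rr * n)) := by noncomm_ring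
    rw [h, sq1, sub_zero]
  have m5b : (1 + (1 - n) * (A * Rr * n)) * (1 - (1 - n) * (A * Rr * n)) = 1 := by
    have h : (1 + (1 - n) * (A * Rr * n)) * (1 - (1 - n) * (A * Rr * n))
        = 1 - ((1 - n) * (A * Rr * n)) * ((1 - n) * (A * Rr * n)) := by noncomm_ring
    rw [h, sq1, sub_zero]
  have m6a : (1 - (q * (L * C)) * (1 - q)) * (1 + (q * (L * C)) * (1 - q)) = 1 := by
    have h : (1 - (q * (L * C)) * (1 - q)) * (1 + (q * (L * C)) * (1 - q))
        = 1 - ((q * (L * C)) * (1 - q)) * ((q * (L * C)) * (1 - q)) := by noncomm_ring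
    rw [h, sq2, sub_zero]
  have m6b : (1 + (q * (L * C)) * (1 - q)) * (1 - (q * (L * C)) * (1 - q)) = 1 := by
    have h : (1 + (q * (L * C)) * (1 - q)) * (1 - (q * (L * C)) * (1 - q))
        = 1 - ((q * (L * C)) * (1 - q)) * ((q * (L * C)) * (1 - q)) := by noncomm_ring
    rw [h, sq2, sub_zero]
  have big : (1 - (1 - n) * (A * Rr * n)) * (B + A * Rr * n * (n * W' * q) * (q * (L * C)) * S)
      * (1 - (q * (L * C)) * (1 - q)) = B + (n * W' * q) * S := by
    rw [m1, m2]
  have uP : IsUnit (B + (n * W' * q) * S) :=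
    ⟨⟨B + (n * W' * q) * S, (1 - q) * W * (1 - n) + q * W * n * S', m3, m4⟩, rfl⟩
  have u1 : IsUnit (1 + (1 - n) * (A * Rr * n)) :=
    ⟨⟨1 + (1 - n) * (A * Rr * n), 1 - (1 - n) * (A * Rr * n), m5b, m5a⟩, rfl⟩
  have u2 : IsUnit (1 + (q * (L * C)) * (1 - q)) :=
    ⟨⟨1 + (q * (L * C)) * (1 - q), 1 - (q * (L * C)) * (1 - q), m6b, m6a⟩, rfl⟩
  have u0 : B + A * (Rr * n * W' * q * L) * S * C
      = B + A * Rr * n * (n * W' * q) * (q * (L * C)) * S := by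
    have h1 : B + A * Rr * n * (n * W' * q) * (q * (L * C)) * S
        = B + A * (Rr * n * W' * q * L) * (C * S) := by
      rw [show B + A * Rr * n * (n * W' * q) * (q * (L * C)) * S
          = B + A * Rr * (n * n) * W' * (q * q) * (L * C) * S from by noncomm_ring, e3, e4]
      noncomm_ring
    rw [h1, ← hS C]; noncomm_ring
  have hx : B + A * Rr * n * (n * W' * q) * (q * (L * C)) * S
      = (1 + (1 - n) * (A * Rr * n)) * (B + (n * W' * q) * S)
        * (1 + (q * (L * C)) * (1 - q)) := by
    rw [← big]
    calc B + A * Rr * n * (n * W' * q) * (q * (L * C)) * S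
        = 1 * (B + A * Rr * n * (n * W' * q) * (q * (L * C)) * S) * 1 := by
          rw [one_mul, mul_one]
      _ = ((1 + (1 - n) * (A * Rr * n)) * (1 - (1 - n) * (A * Rr * n)))
            * (B + A * Rr * n * (n * W' * q) * (q * (L * C)) * S)
            * ((1 - (q * (L * C)) * (1 - q)) * (1 + (q * (L * C)) * (1 - q))) := by
          rw [m5b, m6a]
      _ = (1 + (1 - n) * (A * Rr * n))
            * ((1 - (1 - n) * (A * Rr * n)) * (B + A * Rr * n * (n * W' * q) * (q * (L * C)) * S)
              * (1 - (q * (L * C)) * (1 - q)))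
            * (1 + (q * (L * C)) * (1 - q)) := by noncomm_ring
  rw [u0, hx]
  exact (u1.mul uP).mul u2

/-- Lemma 4.1: if E/Jac(E) is unit-regular and aE + bE = E = Eb + Ec, then there is
d ∈ E such that b + a*d*s*c is a unit for every central unit s of E.  Unit-regularity
modulo the Jacobson radical is phrased via the standard membership criterion:
x ∈ Jac(E) iff 1 - y*x is a unit for every y. -/
theorem unitRegular_mod_jacobson_unit_perturbation (E : Type*) [Ring E]
    (hur : ∀ x : E, ∃ v : Eˣ, ∀ y : E, IsUnit (1 - y * (x - x * ↑v * x)))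
    (a b c : E)
    (h1 : ∃ e f : E, a * e + b * f = 1)
    (h2 : ∃ g h : E, g * b + h * c = 1) :
    ∃ d : E, ∀ s : E, IsUnit s → s ∈ Set.center E → IsUnit (b + a * d * s * c) := by
  obtain ⟨e', f', hef⟩ := h1
  obtain ⟨g, h, hgh⟩ := h2
  obtain ⟨v, hv⟩ := hur b
  refine ⟨e' * (1 - b * ↑v) * ↑v⁻¹ * (1 - ↑v * b) * h, ?_⟩
  intro s hsu hsc
  have hπb : ((b : E) : (jCon E).Quotient) = ((b * ↑v * b : E) : (jCon E).Quotient) :=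
    jCon_of_InJ hv
  have hB : ((b : E) : (jCon E).Quotient) * ↑(↑v : E) * ↑b = ↑b := by
    rw [← RingCon.coe_mul, ← RingCon.coe_mul, ← hπb]
  have hWW' : ((↑v : E) : (jCon E).Quotient) * ↑(↑v⁻¹ : E) = 1 := by
    rw [← RingCon.coe_mul, Units.mul_inv, RingCon.coe_one]
  have hW'W : ((↑v⁻¹ : E) : (jCon E).Quotient) * ↑(↑v : E) = 1 := by
    rw [← RingCon.coe_mul, Units.inv_mul, RingCon.coe_one]
  have hsE : (s * ↑hsu.unit⁻¹ : E) = 1 := by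
    nth_rewrite 1 [← hsu.unit_spec]
    exact hsu.unit.mul_inv
  have hsE' : (↑hsu.unit⁻¹ * s : E) = 1 := by
    nth_rewrite 2 [← hsu.unit_spec]
    exact hsu.unit.inv_mul
  have hSS' : ((s : E) : (jCon E).Quotient) * ↑(↑hsu.unit⁻¹ : E) = 1 := by
    rw [← RingCon.coe_mul, hsE, RingCon.coe_one]
  have hS'S : ((↑hsu.unit⁻¹ : E) : (jCon E).Quotient) * ↑s = 1 := by
    rw [← RingCon.coe_mul, hsE', RingCon.coe_one]
  have hS : ∀ x : (jCon E).Quotient, ((s : E) : (jCon E).Quotient) * x = x * ↑s := by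
    intro x
    obtain ⟨z, rfl⟩ := Quotient.mk''_surjective x
    show ((s * z : E) : (jCon E).Quotient) = ((z * s : E) : (jCon E).Quotient)
    rw [(Set.mem_center_iff.mp hsc).comm z]
  have hef' : ((a : E) : (jCon E).Quotient) * ↑e' + ↑b * ↑f' = 1 := by
    rw [← RingCon.coe_mul, ← RingCon.coe_mul, ← RingCon.coe_add, hef, RingCon.coe_one]
  have hgh' : ((g : E) : (jCon E).Quotient) * ↑b + ↑h * ↑c = 1 := by
    rw [← RingCon.coe_mul, ← RingCon.coe_mul, ← RingCon.coe_add, hgh, RingCon.coe_one]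
  have z1 : (1 - ((b : E) : (jCon E).Quotient) * ↑(↑v : E)) * ↑b = 0 := by
    rw [sub_mul, one_mul, hB, sub_self]
  have z2 : ((b : E) : (jCon E).Quotient) * (1 - ↑(↑v : E) * ↑b) = 0 := by
    rw [mul_sub, mul_one, ← mul_assoc, hB, sub_self]
  have hAR : (1 - ((b : E) : (jCon E).Quotient) * ↑(↑v : E)) * (↑a * ↑e')
      = 1 - ((b : E) : (jCon E).Quotient) * ↑(↑v : E) := by
    have hA : ((a : E) : (jCon E).Quotient) * ↑e' = 1 - ↑b * ↑f' := by
      rw [← hef']; noncomm_ring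
    rw [hA, mul_sub, mul_one, ← mul_assoc, z1, zero_mul, sub_zero]
  have hLC : (((h : E) : (jCon E).Quotient) * ↑c) * (1 - ↑(↑v : E) * ↑b)
      = 1 - ((↑v : E) : (jCon E).Quotient) * ↑b := by
    have hL : ((h : E) : (jCon E).Quotient) * ↑c = 1 - ↑g * ↑b := by
      rw [← hgh']; noncomm_ring
    rw [hL, sub_mul, one_mul, mul_assoc, z2, mul_zero, sub_zero]
  have hk := key_unit ((a : E) : (jCon E).Quotient) ↑b ↑c (↑(↑v : E)) (↑(↑v⁻¹ : E)) ↑e' ↑h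
      ↑s (↑(↑hsu.unit⁻¹ : E)) hWW' hW'W hSS' hS'S hS hB hAR hLC
  apply isUnit_of_jCon
  have hcast : ((b + a * (e' * (1 - b * ↑v) * ↑v⁻¹ * (1 - ↑v * b) * h) * s * c : E) :
      (jCon E).Quotient)
      = ↑b + ↑a * (↑e' * (1 - ↑b * ↑(↑v : E)) * ↑(↑v⁻¹ : E) * (1 - ↑(↑v : E) * ↑b) * ↑h)
        * ↑s * ↑c := by
    simp only [RingCon.coe_add, RingCon.coe_mul, RingCon.coe_sub, RingCon.coe_one]
  rw [hcast]
  exact hk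
end

section
/- Let M and N be right modules over a ring S with E := End_S(N) of stable rank 1. Let (e, f) : N ⊕ M → N be a split surjection (e ∈ E, f ∈ Hom_S(M,N)), and suppose there is a split surjection h ∈ Hom_S(M,N). Then there exists z ∈ Hom_S(N, M) such that eE + (f∘z)E = E and E(h∘z) = E. -/
/-- Key ring identity (a one-sided instance of Vaserstein's symmetry for stable rank one):
if `u = F + c(1-HF)` has right inverse `v`, then `F + (1-FH)c` has explicit right inverse
`H + (1-HF)v(1-cH)`. -/
theorem special_section_aux {R : Type*} [Ring R] (F H c v : R)
    (huv : (F + c * (1 - H * F)) * v = 1) :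
    (F + (1 - F * H) * c) * (H + (1 - H * F) * (v * (1 - c * H))) = 1 := by
  have t1 : (F + (1 - F * H) * c) * (1 - H * F)
      = (1 - F * H) * (F + c * (1 - H * F)) := by noncomm_ring
  calc (F + (1 - F * H) * c) * (H + (1 - H * F) * (v * (1 - c * H)))
      = (F + (1 - F * H) * c) * H
        + ((F + (1 - F * H) * c) * (1 - H * F)) * (v * (1 - c * H)) := by noncomm_ring
    _ = (F + (1 - F * H) * c) * H
        + (1 - F * H) * (((F + c * (1 - H * F)) * v) * (1 - c * H)) := by
          rw [t1]; noncomm_ring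
    _ = (F + (1 - F * H) * c) * H
        + (1 - F * H) * (1 * (1 - c * H)) := by rw [huv]
    _ = 1 := by noncomm_ring

/-- Combination lemma: assembling the final unimodularity relation. -/
theorem special_section_aux2 {R : Type*} [Ring R] (e p G F H c W : R)
    (hrel : e * p + G = 1) (hw1 : (F + (1 - F * H) * c) * W = 1) :
    e * (p * (c * W)) + ((G - F * H) * c + F) * W = 1 := by
  calc e * (p * (c * W)) + ((G - F * H) * c + F) * W
      = (F + (1 - F * H) * c) * W + ((e * p + G) - 1) * (c * W) := by noncomm_ring
    _ = (F + (1 - F * H) * c) * W + (1 - 1) * (c * W) := by rw [hrel]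
    _ = 1 := by rw [hw1]; noncomm_ring

/-- Lemma 4.3: if (e,f) : N ⊕ M → N is a split surjection and Hom_S(M,N) contains a
split surjection h, then there is z : N → M with eE + (f∘z)E = E and E(h∘z) = E. -/
theorem special_section (S : Type*) [Ring S]
    (M N : Type*) [AddCommGroup M] [Module S M] [AddCommGroup N] [Module S N]
    (hsr1 : ∀ a b : Module.End S N, (∃ x y : Module.End S N, x * a + y * b = 1) →
      ∃ c : Module.End S N, IsUnit (a + c * b))
    (e : Module.End S N) (f : M →ₗ[S] N)
    (hef : ∃ (p : Module.End S N) (q : N →ₗ[S] M), e ∘ₗ p + f ∘ₗ q = LinearMap.id)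
    (h : M →ₗ[S] N) (hh : ∃ r : N →ₗ[S] M, h ∘ₗ r = LinearMap.id) :
    ∃ z : N →ₗ[S] M,
      (∃ a b : Module.End S N, e ∘ₗ a + (f ∘ₗ z) ∘ₗ b = LinearMap.id) ∧
      (∃ c : Module.End S N, c ∘ₗ (h ∘ₗ z) = LinearMap.id) := by
  obtain ⟨p, q, hpq⟩ := hef
  obtain ⟨r, hr⟩ := hh
  have hhr : ∀ x, h (r x) = x := fun x => by
    have := LinearMap.ext_iff.mp hr x
    simpa using this
  -- abbreviations (as plain terms)
  -- Fe := f ∘ₗ r, He := h ∘ₗ q  (elements of E = End S N)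
  obtain ⟨c, hc⟩ := hsr1 (f ∘ₗ r) (1 - (h ∘ₗ q) * (f ∘ₗ r))
    ⟨h ∘ₗ q, 1, by noncomm_ring⟩
  obtain ⟨U, hU⟩ := hc
  have huv : ((f ∘ₗ r) + c * (1 - (h ∘ₗ q) * (f ∘ₗ r))) * (↑U⁻¹ : Module.End S N) = 1 := by
    rw [← hU]; exact U.mul_inv
  have hw1 := special_section_aux (f ∘ₗ r) (h ∘ₗ q) c (↑U⁻¹ : Module.End S N) huv
  set W : Module.End S N :=
    (h ∘ₗ q) + (1 - (h ∘ₗ q) * (f ∘ₗ r)) * ((↑U⁻¹ : Module.End S N) * (1 - c * (h ∘ₗ q)))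
    with hWdef
  refine ⟨(q - r ∘ₗ (h ∘ₗ q)) ∘ₗ c + r, ⟨p * (c * W), W, ?_⟩, ⟨LinearMap.id, ?_⟩⟩
  · -- first condition
    have hfz : f ∘ₗ ((q - r ∘ₗ (h ∘ₗ q)) ∘ₗ c + r)
        = ((f ∘ₗ q - (f ∘ₗ r) * (h ∘ₗ q)) * c + (f ∘ₗ r) : Module.End S N) := by
      ext x
      simp [LinearMap.add_apply, LinearMap.sub_apply, LinearMap.comp_apply,
        Module.End.mul_apply, map_sub, map_add]
    rw [hfz]
    have hrel : e * p + (f ∘ₗ q : Module.End S N) = 1 := hpq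
    have := special_section_aux2 e p (f ∘ₗ q : Module.End S N) (f ∘ₗ r) (h ∘ₗ q) c W hrel hw1
    exact this
  · -- second condition
    have hz : h ∘ₗ ((q - r ∘ₗ (h ∘ₗ q)) ∘ₗ c + r) = LinearMap.id := by
      ext x
      simp [LinearMap.add_apply, LinearMap.sub_apply, LinearMap.comp_apply, map_sub, hhr]
    rw [hz]
    exact LinearMap.id_comp _
end

section
/- Let M, N be right S-modules with E = End_S(N) of stable rank 1, let x, y ∈ Hom_S(M, N) be split surjections with sections p and q respectively (x∘p = id_N = y∘q). Then there exists a unit φ of End_S(M) with x ∘ φ = y. -/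
/-- Transitivity step: if End_S(N) has stable rank 1 and x, y : M → N are split
surjections, then there is a unit φ of End_S(M) with x ∘ φ = y. -/
theorem split_surjections_transitive (S : Type*) [Ring S]
    (M N : Type*) [AddCommGroup M] [Module S M] [AddCommGroup N] [Module S N]
    (hsr1 : ∀ a b : Module.End S N, (∃ x y : Module.End S N, x * a + y * b = 1) →
      ∃ c : Module.End S N, IsUnit (a + c * b))
    (x y : M →ₗ[S] N) (p q : N →ₗ[S] M)
    (hx : x ∘ₗ p = LinearMap.id) (hy : y ∘ₗ q = LinearMap.id) :
    ∃ φ : (Module.End S M)ˣ, x ∘ₗ (↑φ : Module.End S M) = y := by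
  classical
  have hx' : ∀ n, x (p n) = n := fun n => congrArg (fun f : N →ₗ[S] N => f n) hx
  have hy' : ∀ n, y (q n) = n := fun n => congrArg (fun f : N →ₗ[S] N => f n) hy
  set a : Module.End S N := x ∘ₗ q with ha
  set b : Module.End S N := y ∘ₗ ((LinearMap.id - p ∘ₗ x) ∘ₗ q) with hb
  have hab : ∃ u v : Module.End S N, u * a + v * b = 1 := by
    refine ⟨y ∘ₗ p, 1, ?_⟩
    ext n
    simp [ha, hb, Module.End.mul_apply, hx', hy', map_sub]
  obtain ⟨c, hc⟩ := hsr1 a b hab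
  set T : (Module.End S N)ˣ := hc.unit with hTdef
  have hT : (↑T : Module.End S N) = a + c * b := rfl
  have hTT : ∀ n, (↑T : Module.End S N) ((↑T⁻¹ : Module.End S N) n) = n := fun n => by
    rw [← Module.End.mul_apply, T.mul_inv]; rfl
  have hTT' : ∀ n, (↑T⁻¹ : Module.End S N) ((↑T : Module.End S N) n) = n := fun n => by
    rw [← Module.End.mul_apply, T.inv_mul]; rfl
  -- First unit: g = 1 + A with A square-zero
  set A : Module.End S M := p ∘ₗ (c ∘ₗ (y ∘ₗ (LinearMap.id - p ∘ₗ x))) with hAdef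
  have hA2 : A * A = 0 := by
    ext m
    simp [hAdef, Module.End.mul_apply, hx', map_sub]
  have g1 : (1 + A) * (1 - A) = 1 := by
    rw [show (1 + A) * (1 - A) = 1 - A * A by noncomm_ring, hA2, sub_zero]
  have g2 : (1 - A) * (1 + A) = 1 := by
    rw [show (1 - A) * (1 + A) = 1 - A * A by noncomm_ring, hA2, sub_zero]
  set g : (Module.End S M)ˣ := ⟨1 + A, 1 - A, g1, g2⟩ with hgdef
  set h : M →ₗ[S] N := x ∘ₗ (↑g : Module.End S M) with hhdef
  have key : ∀ n, h (q n) = (↑T : Module.End S N) n := by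
    intro n
    simp [hhdef, hgdef, hAdef, hT, ha, hb, Module.End.mul_apply, hx', hy', map_sub, map_add]
  -- Second unit: r
  have hFmul : ∀ s s' : Module.End S N,
      ((q ∘ₗ (s ∘ₗ y)) * (q ∘ₗ (s' ∘ₗ y)) : Module.End S M) = q ∘ₗ ((s * s') ∘ₗ y) := by
    intro s s'
    ext m
    simp [Module.End.mul_apply, hy']
  have hFadd : ∀ s s' : Module.End S N,
      ((q ∘ₗ (s ∘ₗ y)) + (q ∘ₗ (s' ∘ₗ y)) : Module.End S M) = q ∘ₗ ((s + s') ∘ₗ y) := by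
    intro s s'
    ext m
    simp
  have hFzero : (q ∘ₗ ((0 : Module.End S N) ∘ₗ y) : Module.End S M) = 0 := by
    ext m; simp
  have runit : ∀ s s' : Module.End S N, s + s' + s * s' = 0 →
      (1 + q ∘ₗ (s ∘ₗ y)) * (1 + q ∘ₗ (s' ∘ₗ y)) = (1 : Module.End S M) := by
    intro s s' hss
    have : (1 + q ∘ₗ (s ∘ₗ y)) * (1 + q ∘ₗ (s' ∘ₗ y))
        = 1 + ((q ∘ₗ (s ∘ₗ y)) + (q ∘ₗ (s' ∘ₗ y)) + (q ∘ₗ (s ∘ₗ y)) * (q ∘ₗ (s' ∘ₗ y))) := by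
      noncomm_ring
    rw [this, hFmul, hFadd, hFadd, hss, hFzero, add_zero]
  have hs1 : ((↑T⁻¹ : Module.End S N) - 1) + ((↑T : Module.End S N) - 1)
      + ((↑T⁻¹ : Module.End S N) - 1) * ((↑T : Module.End S N) - 1) = 0 := by
    calc ((↑T⁻¹ : Module.End S N) - 1) + ((↑T : Module.End S N) - 1)
        + ((↑T⁻¹ : Module.End S N) - 1) * ((↑T : Module.End S N) - 1)
        = (↑T⁻¹ : Module.End S N) * (↑T : Module.End S N) - 1 := by noncomm_ring
      _ = 0 := by rw [T.inv_mul]; exact sub_self 1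
  have hs2 : ((↑T : Module.End S N) - 1) + ((↑T⁻¹ : Module.End S N) - 1)
      + ((↑T : Module.End S N) - 1) * ((↑T⁻¹ : Module.End S N) - 1) = 0 := by
    calc ((↑T : Module.End S N) - 1) + ((↑T⁻¹ : Module.End S N) - 1)
        + ((↑T : Module.End S N) - 1) * ((↑T⁻¹ : Module.End S N) - 1)
        = (↑T : Module.End S N) * (↑T⁻¹ : Module.End S N) - 1 := by noncomm_ring
      _ = 0 := by rw [T.mul_inv]; exact sub_self 1
  set r : (Module.End S M)ˣ :=
    ⟨1 + q ∘ₗ (((↑T⁻¹ : Module.End S N) - 1) ∘ₗ y),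
     1 + q ∘ₗ (((↑T : Module.End S N) - 1) ∘ₗ y),
     runit _ _ hs1, runit _ _ hs2⟩ with hrdef
  set h₂ : M →ₗ[S] N := h ∘ₗ (↑r : Module.End S M) with hh2def
  have hrq : ∀ n, (↑r : Module.End S M) (q n) = q ((↑T⁻¹ : Module.End S N) n) := by
    intro n
    simp [hrdef, hy', map_sub]
  have key2 : ∀ n, h₂ (q n) = n := by
    intro n
    rw [hh2def, LinearMap.comp_apply, hrq, key, hTT]
  -- Third unit: w
  set B : Module.End S M := q ∘ₗ (y - h₂) with hBdef
  have hB2 : B * B = 0 := by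
    ext m
    simp [hBdef, Module.End.mul_apply, map_sub, hy', key2]
  have w1 : (1 + B) * (1 - B) = 1 := by
    rw [show (1 + B) * (1 - B) = 1 - B * B by noncomm_ring, hB2, sub_zero]
  have w2 : (1 - B) * (1 + B) = 1 := by
    rw [show (1 - B) * (1 + B) = 1 - B * B by noncomm_ring, hB2, sub_zero]
  set w : (Module.End S M)ˣ := ⟨1 + B, 1 - B, w1, w2⟩ with hwdef
  refine ⟨g * r * w, ?_⟩
  have hxg : ∀ m, x ((↑g : Module.End S M) m) = h m := fun m => rfl
  ext m
  have : x ((↑(g * r * w) : Module.End S M) m)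
      = h₂ ((↑w : Module.End S M) m) := by
    simp only [Units.val_mul, Module.End.mul_apply, hh2def, LinearMap.comp_apply, hxg]
  rw [LinearMap.comp_apply, this]
  -- h₂ (m + B m) = y m
  have : h₂ ((↑w : Module.End S M) m) = h₂ m + h₂ (q (y m - h₂ m)) := by
    simp [hwdef, hBdef, map_add]
  rw [this, key2]
  simp
end

section
/- Every principal ideal domain of stable rank 1 is a Euclidean domain. -/
open UniqueFactorizationMonoid in
/-- Estes–Ohm: every principal ideal domain of stable rank 1 is a Euclidean domain. -/
theorem pid_stableRankOne_euclidean (R : Type*) [CommRing R] [IsDomain R]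
    [IsPrincipalIdealRing R]
    (hsr1 : ∀ a b : R, (∃ x y : R, x * a + y * b = 1) → ∃ c : R, IsUnit (a + c * b)) :
    ∃ ν : R → ℕ, ∀ a b : R, b ≠ 0 →
      ∃ q r : R, a = b * q + r ∧ (r = 0 ∨ ν r < ν b) := by
  letI : NormalizationMonoid R := UniqueFactorizationMonoid.normalizationMonoid.toNormalizationMonoid
  refine ⟨fun x => (normalizedFactors x).card, fun a b hb => ?_⟩
  by_cases hba : b ∣ a
  · obtain ⟨q, rfl⟩ := hba
    exact ⟨q, 0, by ring, Or.inl rfl⟩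
  · -- take d a generator of the ideal (a, b)
    obtain ⟨d, hd⟩ := (IsPrincipalIdealRing.principal (Ideal.span {a, b})).principal
    have hda : d ∣ a := by
      have : a ∈ Ideal.span {a, b} := Ideal.subset_span (by simp)
      rwa [hd, Ideal.submodule_span_eq, Ideal.mem_span_singleton] at this
    have hdb : d ∣ b := by
      have : b ∈ Ideal.span {a, b} := Ideal.subset_span (by simp)
      rwa [hd, Ideal.submodule_span_eq, Ideal.mem_span_singleton] at this
    obtain ⟨a', rfl⟩ := hda
    obtain ⟨b', rfl⟩ := hdb
    have hd0 : d ≠ 0 := fun h => hb (by simp [h])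
    have hdmem : d ∈ Ideal.span {d * a', d * b'} := by
      rw [hd, Ideal.submodule_span_eq, Ideal.mem_span_singleton]
    obtain ⟨x, y, hxy⟩ := Ideal.mem_span_pair.mp hdmem
    have hcomb : x * a' + y * b' = 1 := by
      have : d * (x * a' + y * b') = d * 1 := by ring_nf; ring_nf at hxy; linear_combination hxy
      exact mul_left_cancel₀ hd0 this
    obtain ⟨c, hu⟩ := hsr1 a' b' ⟨x, y, hcomb⟩
    refine ⟨-c, d * (a' + c * b'), by ring, Or.inr ?_⟩
    have hr : Associated d (d * (a' + c * b')) := (associated_mul_unit_right d _ hu)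
    simp only []
    rw [← hr.normalizedFactors_eq]
    have hb'nu : ¬ IsUnit b' := by
      intro hb'
      obtain ⟨u, rfl⟩ := hb'
      refine hba ⟨↑u⁻¹ * a', ?_⟩
      have : (↑u * ↑u⁻¹ : R) = 1 := u.mul_inv
      linear_combination (-(d * a')) * this
    have : DvdNotUnit d (d * b') := ⟨hd0, b', hb'nu, rfl⟩
    exact Multiset.card_lt_card
      ((dvdNotUnit_iff_normalizedFactors_lt_normalizedFactors hd0 hb).mp this)
end

section
/- Let M, N be right S-modules, E = End_S(N) of stable rank 1, and (f_1, ..., f_n)^T ∈ Hom_S(M, N^{⊕n}) for some n ≥ 2. Suppose there is C ∈ M_{m×n}(E) with C·(f_1,...,f_n)^T split surjective for some m ∈ {2,...,n}. Let U ∈ GL_n(E) and (g_1,...,g_n)^T := U·(f_1,...,f_n)^T, and let k ∈ {1,...,m−1}. Then there is a matrix B ∈ M_{(m−k)×(n−k)}(E) such that B·(g_1,...,g_{n−k})^T is split surjective (i.e., δ(Eg_1 + ... + Eg_{n−k}) ≥ m − k). -/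
variable {S : Type*} [Ring S] {M N : Type*}
  [AddCommGroup M] [Module S M] [AddCommGroup N] [Module S N]

/-- A column of maps (f₁,…,fₘ)ᵀ : M → N^{⊕m} is a split surjection: it has a
componentwise S-linear section. -/
def IsSplitSurjCol {m : ℕ} (f : Fin m → (M →ₗ[S] N)) : Prop :=
  ∃ z : Fin m → (N →ₗ[S] M), ∀ i j : Fin m,
    f i ∘ₗ z j = if i = j then LinearMap.id else 0

section CoreMatrix

variable {R : Type*} [Ring R]

/-- Single-step: if `D * Φ = 1` (so `Φ` is a split injective frame), then after deleting
the last row of `Φ` one can still split off an identity of one smaller size, provided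
`R` has stable rank one. -/
private lemma step_lemma
    (hsr : ∀ a b : R, (∃ x y : R, x * a + y * b = 1) → ∃ c : R, IsUnit (a + c * b))
    (μ ν : ℕ) (Φ : Matrix (Fin (ν + 1)) (Fin (μ + 1)) R)
    (D : Matrix (Fin (μ + 1)) (Fin (ν + 1)) R) (hDΦ : D * Φ = 1) :
    ∃ (T : Matrix (Fin (μ + 1)) (Fin μ) R) (B : Matrix (Fin μ) (Fin ν) R),
      B * (Φ.submatrix Fin.castSucc id * T) = 1 := by
  classical
  obtain ⟨τ, hu⟩ := hsr (Φ (Fin.last ν) 0) (1 - D 0 (Fin.last ν) * Φ (Fin.last ν) 0)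
    ⟨D 0 (Fin.last ν), 1, by noncomm_ring⟩
  obtain ⟨β, hβ⟩ := hu
  set ω : Fin (μ + 1) → R := fun j => Φ (Fin.last ν) j +
      τ * ((if j = 0 then (1 : R) else 0) - D 0 (Fin.last ν) * Φ (Fin.last ν) j) with hω
  have hω0 : ω 0 = (β : R) := by
    simp only [hω, hβ]; norm_num
  set T : Matrix (Fin (μ + 1)) (Fin μ) R := fun p l =>
      if p = 0 then -(((β⁻¹ : Rˣ) : R) * ω l.succ)
      else if p = l.succ then 1 else 0 with hT
  have hT0 : ∀ l : Fin μ, T 0 l = -(((β⁻¹ : Rˣ) : R) * ω l.succ) := by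
    intro l; simp [hT]
  have hTs : ∀ (p l : Fin μ), T p.succ l = if p = l then (1 : R) else 0 := by
    intro p l
    simp [hT, Fin.succ_ne_zero, Fin.succ_inj]
  have hωT : ∀ l : Fin μ, (∑ p, ω p * T p l) = 0 := by
    intro l
    rw [Fin.sum_univ_succ]
    have h2 : ∀ p : Fin μ, ω p.succ * T p.succ l = if p = l then ω p.succ else 0 := by
      intro p; rw [hTs p l]; split <;> simp
    rw [Finset.sum_congr rfl fun p _ => h2 p, Finset.sum_ite_eq' Finset.univ l
      (fun p => ω p.succ)]
    simp only [Finset.mem_univ, if_pos]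
    rw [hT0, hω0, mul_neg, ← mul_assoc, Units.mul_inv, one_mul, neg_add_cancel]
  set Bt : Matrix (Fin μ) (Fin (ν + 1)) R := fun i q =>
      D i.succ q - D i.succ (Fin.last ν) *
        (τ * D 0 q + (1 - τ * D 0 (Fin.last ν)) * (if q = Fin.last ν then (1 : R) else 0))
      with hBt
  have hBtlast : ∀ i : Fin μ, Bt i (Fin.last ν) = 0 := by
    intro i
    have h : τ * D 0 (Fin.last ν) + (1 - τ * D 0 (Fin.last ν)) = 1 := by abel
    simp only [hBt, eq_self_iff_true, if_true, mul_one, h, sub_self]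
  have hD : ∀ (a p : Fin (μ + 1)), (∑ q, D a q * Φ q p) = if a = p then (1 : R) else 0 := by
    intro a p
    have h1 : (D * Φ) a p = (1 : Matrix (Fin (μ + 1)) (Fin (μ + 1)) R) a p := by rw [hDΦ]
    rw [Matrix.mul_apply] at h1
    rw [h1, Matrix.one_apply]
  have hBΦ : ∀ (i : Fin μ) (p : Fin (μ + 1)),
      (∑ q, Bt i q * Φ q p) = (if i.succ = p then (1 : R) else 0)
        - D i.succ (Fin.last ν) * ω p := by
    intro i p
    have expand : ∀ q, Bt i q * Φ q p
        = D i.succ q * Φ q p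
          - D i.succ (Fin.last ν) * (τ * (D 0 q * Φ q p)
              + (1 - τ * D 0 (Fin.last ν)) * ((if q = Fin.last ν then (1 : R) else 0) * Φ q p)) := by
      intro q; rw [hBt]; noncomm_ring
    rw [Finset.sum_congr rfl fun q _ => expand q, Finset.sum_sub_distrib, hD]
    have h3 : ∑ q, D i.succ (Fin.last ν) * (τ * (D 0 q * Φ q p)
        + (1 - τ * D 0 (Fin.last ν)) * ((if q = Fin.last ν then (1 : R) else 0) * Φ q p))
        = D i.succ (Fin.last ν) * (τ * (∑ q, D 0 q * Φ q p)
          + (1 - τ * D 0 (Fin.last ν)) * (∑ q, (if q = Fin.last ν then (1 : R) else 0) * Φ q p)) := by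
      rw [← Finset.mul_sum, Finset.sum_add_distrib, ← Finset.mul_sum, ← Finset.mul_sum]
    rw [h3, hD]
    have h4 : (∑ q, (if q = Fin.last ν then (1 : R) else 0) * Φ q p) = Φ (Fin.last ν) p := by
      simp [ite_mul]
    rw [h4, hω]
    have h5 : (if (0 : Fin (μ+1)) = p then (1:R) else 0) = (if p = 0 then (1:R) else 0) := by
      by_cases h : p = 0
      · subst h; rfl
      · rw [if_neg h, if_neg (fun hh => h hh.symm)]
    rw [h5]
    noncomm_ring
  refine ⟨T, fun i q => Bt i q.castSucc, ?_⟩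
  ext i l
  show (∑ q : Fin ν, Bt i q.castSucc * (Φ.submatrix Fin.castSucc id * T) q l) = (1 : Matrix (Fin μ) (Fin μ) R) i l
  rw [Matrix.one_apply]
  have hin : ∀ q : Fin ν, (Φ.submatrix Fin.castSucc id * T) q l
      = ∑ p, Φ q.castSucc p * T p l := by
    intro q; rw [Matrix.mul_apply]
    exact Finset.sum_congr rfl fun p _ => by rw [Matrix.submatrix_apply]; rfl
  calc (∑ q : Fin ν, Bt i q.castSucc * (Φ.submatrix Fin.castSucc id * T) q l)
      = ∑ q : Fin ν, Bt i q.castSucc * ∑ p, Φ q.castSucc p * T p l := by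
        exact Finset.sum_congr rfl fun q _ => by rw [hin q]
    _ = ∑ q : Fin (ν + 1), Bt i q * ∑ p, Φ q p * T p l := by
        rw [Fin.sum_univ_castSucc (f := fun q => Bt i q * ∑ p, Φ q p * T p l)]
        rw [hBtlast i, zero_mul, add_zero]
    _ = ∑ p, (∑ q : Fin (ν + 1), Bt i q * Φ q p) * T p l := by
        simp_rw [Finset.mul_sum, Finset.sum_mul, mul_assoc]
        exact Finset.sum_comm
    _ = ∑ p, ((if i.succ = p then (1 : R) else 0) - D i.succ (Fin.last ν) * ω p) * T p l := by
        exact Finset.sum_congr rfl fun p _ => by rw [hBΦ i p]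
    _ = (∑ p, (if i.succ = p then (1 : R) else 0) * T p l)
          - D i.succ (Fin.last ν) * ∑ p, ω p * T p l := by
        simp_rw [sub_mul, mul_assoc]
        rw [Finset.sum_sub_distrib, ← Finset.mul_sum]
    _ = T i.succ l := by
        rw [hωT l, mul_zero, sub_zero]
        simp [ite_mul]
    _ = if i = l then 1 else 0 := by
        rw [hTs i l]

/-- Iterated deletion of `k` rows. -/
private lemma iterate_lemma
    (hsr : ∀ a b : R, (∃ x y : R, x * a + y * b = 1) → ∃ c : R, IsUnit (a + c * b)) :
    ∀ (k a b : ℕ) (G : Matrix (Fin (b + k)) (Fin (a + k)) R)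
      (D : Matrix (Fin (a + k)) (Fin (b + k)) R), D * G = 1 →
      ∃ (B : Matrix (Fin a) (Fin b) R) (T : Matrix (Fin (a + k)) (Fin a) R),
        B * (G.submatrix (Fin.castLE (Nat.le_add_right b k)) id * T) = 1 := by
  intro k
  induction k with
  | zero =>
      intro a b G D hDG
      set T0 : Matrix (Fin (a + 0)) (Fin a) R :=
        fun p l => if p = Fin.castLE (Nat.le_add_right a 0) l then 1 else 0 with hT0def
      refine ⟨D, T0, ?_⟩
      ext i l
      rw [Matrix.mul_apply, Matrix.one_apply]
      have h1 : ∀ j, (G.submatrix (Fin.castLE (Nat.le_add_right b 0)) id * T0) j l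
          = G (Fin.castLE (Nat.le_add_right b 0) j) (Fin.castLE (Nat.le_add_right a 0) l) := by
        intro j
        rw [Matrix.mul_apply]
        simp [hT0def, Matrix.submatrix_apply, mul_ite]
      have h2 : (D * G) i (Fin.castLE (Nat.le_add_right a 0) l)
          = (1 : Matrix (Fin (a + 0)) (Fin (a + 0)) R) i (Fin.castLE (Nat.le_add_right a 0) l) := by
        rw [hDG]
      rw [Matrix.mul_apply, Matrix.one_apply] at h2
      have h3 : (∑ j, D i j * (G.submatrix (Fin.castLE (Nat.le_add_right b 0)) id * T0) j l)
          = ∑ j, D i j *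
              G (Fin.castLE (Nat.le_add_right b 0) j) (Fin.castLE (Nat.le_add_right a 0) l) :=
        Finset.sum_congr rfl fun j _ => by rw [h1 j]
      rw [h3]
      exact h2
  | succ k ih =>
      intro a b G D hDG
      obtain ⟨T₁, B₁, h₁⟩ := step_lemma hsr (a + k) (b + k) G D hDG
      obtain ⟨B₂, T₂, h₂⟩ := ih a b _ B₁ h₁
      refine ⟨B₂, T₁ * T₂, ?_⟩
      have hc : ∀ i : Fin b, (Fin.castSucc (Fin.castLE (Nat.le_add_right b k) i) : Fin (b + (k + 1)))
          = Fin.castLE (Nat.le_add_right b (k + 1)) i := fun i => Fin.ext rfl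
      have e1 : (((G.submatrix (Fin.castSucc : Fin (b + k) → Fin (b + k + 1)) id :
            Matrix (Fin (b + k)) (Fin (a + k + 1)) R) * T₁).submatrix
            (Fin.castLE (Nat.le_add_right b k)) id)
          = ((G.submatrix (Fin.castSucc : Fin (b + k) → Fin (b + k + 1)) id :
            Matrix (Fin (b + k)) (Fin (a + k + 1)) R).submatrix
            (Fin.castLE (Nat.le_add_right b k)) id) * T₁ := by
        ext i j
        simp [Matrix.mul_apply, Matrix.submatrix_apply]
      have e2 : ((G.submatrix (Fin.castSucc : Fin (b + k) → Fin (b + k + 1)) id :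
            Matrix (Fin (b + k)) (Fin (a + k + 1)) R).submatrix
            (Fin.castLE (Nat.le_add_right b k)) id)
          = (G.submatrix (Fin.castLE (Nat.le_add_right b (k + 1))) id :
              Matrix (Fin b) (Fin (a + k + 1)) R) := by
        ext i j
        simp only [Matrix.submatrix_apply, id_eq]
        rw [hc i]
      have final : B₂ * (((G.submatrix (Fin.castLE (Nat.le_add_right b (k + 1))) id :
          Matrix (Fin b) (Fin (a + k + 1)) R) * T₁) * T₂) = 1 := by
        rw [← e2, ← e1]
        exact h₂
      rw [Matrix.mul_assoc] at final
      exact final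

end CoreMatrix

/-- Lemma 3.4: if sr(End_S N) = 1, δ(Ef₁ + ⋯ + Efₙ) ≥ m, and
(g₁,…,gₙ)ᵀ = U·(f₁,…,fₙ)ᵀ for U ∈ GL_n(E), then for 1 ≤ k ≤ m − 1 we have
δ(Eg₁ + ⋯ + Eg_{n−k}) ≥ m − k. -/
theorem delta_after_unit_truncation (hsr1 : ∀ a b : Module.End S N,
      (∃ x y : Module.End S N, x * a + y * b = 1) →
      ∃ c : Module.End S N, IsUnit (a + c * b))
    (n m k : ℕ) (hn : 2 ≤ n) (hm2 : 2 ≤ m) (hmn : m ≤ n) (hk1 : 1 ≤ k) (hkm : k ≤ m - 1)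
    (f : Fin n → (M →ₗ[S] N))
    (C : Fin m → Fin n → Module.End S N)
    (hC : IsSplitSurjCol (fun i => ∑ j, C i j ∘ₗ f j))
    (U V : Fin n → Fin n → Module.End S N)
    (hUV : ∀ i l : Fin n, ∑ j, U i j * V j l = if i = l then 1 else 0)
    (hVU : ∀ i l : Fin n, ∑ j, V i j * U j l = if i = l then 1 else 0)
    (g : Fin n → (M →ₗ[S] N)) (hg : ∀ i, g i = ∑ j, U i j ∘ₗ f j) :
    ∃ B : Fin (m - k) → Fin (n - k) → Module.End S N,
      IsSplitSurjCol (fun i => ∑ j, B i j ∘ₗ g (Fin.castLE (by omega) j)) := by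
  classical
  obtain ⟨z, hz⟩ := hC
  -- f in terms of g
  have hf : ∀ j, (∑ l, V j l ∘ₗ g l) = f j := by
    intro j
    have h1 : ∀ l, V j l ∘ₗ g l = ∑ p, (V j l * U l p) ∘ₗ f p := by
      intro l
      rw [hg l]
      ext v
      simp [LinearMap.sum_apply, Module.End.mul_apply, map_sum]
    simp_rw [h1]
    rw [Finset.sum_comm]
    have h2 : ∀ p, (∑ l, (V j l * U l p) ∘ₗ f p) = (∑ l, V j l * U l p) ∘ₗ f p := by
      intro p; ext v; simp [LinearMap.sum_apply]
    simp_rw [h2, hVU]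
    have h3 : ∀ p, ((if j = p then (1 : Module.End S N) else 0) ∘ₗ f p)
        = if j = p then f p else 0 := by
      intro p; split <;> simp [Module.End.one_eq_id]
    simp_rw [h3]
    simp [Finset.sum_ite_eq]
  obtain ⟨m', hm'⟩ : ∃ m', m = m' + k := ⟨m - k, by omega⟩
  obtain ⟨n', hn'⟩ : ∃ n', n = n' + k := ⟨n - k, by omega⟩
  subst hm' hn'
  set Dm : Matrix (Fin (m' + k)) (Fin (n' + k)) (Module.End S N) :=
    fun i l => ∑ j, C i j * V j l with hDm
  set G : Matrix (Fin (n' + k)) (Fin (m' + k)) (Module.End S N) :=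
    fun j l => g j ∘ₗ z l with hG
  have hDg : ∀ i, (∑ l, Dm i l ∘ₗ g l) = ∑ j, C i j ∘ₗ f j := by
    intro i
    have h1 : ∀ l, Dm i l ∘ₗ g l = ∑ j, (C i j * V j l) ∘ₗ g l := by
      intro l; rw [hDm]; ext v; simp [LinearMap.sum_apply]
    simp_rw [h1]
    rw [Finset.sum_comm]
    have h2 : ∀ j, (∑ l, (C i j * V j l) ∘ₗ g l) = C i j ∘ₗ (∑ l, V j l ∘ₗ g l) := by
      intro j; ext v; simp [LinearMap.sum_apply, Module.End.mul_apply, map_sum]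
    simp_rw [h2, hf]
  have hDG : Dm * G = 1 := by
    ext i l
    rw [Matrix.mul_apply, Matrix.one_apply]
    have h1 : (∑ p, Dm i p * G p l) = (∑ p, Dm i p ∘ₗ g p) ∘ₗ z l := by
      ext v
      simp [hG, LinearMap.sum_apply, Module.End.mul_apply]
    rw [h1, hDg i, hz i l]
    by_cases h : i = l <;> simp [h, Module.End.one_eq_id]
  obtain ⟨B₀, T, hfin⟩ := iterate_lemma hsr1 k m' n' G Dm hDG
  have heqm : m' + k - k = m' := by omega
  have heqn : n' + k - k = n' := by omega
  have main : ∀ i l : Fin m',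
      (∑ j : Fin n', B₀ i j ∘ₗ g (Fin.castLE (Nat.le_add_right n' k) j))
        ∘ₗ (∑ p, z p ∘ₗ T p l) = if i = l then LinearMap.id else 0 := by
    intro i l
    have hentry : (B₀ * (G.submatrix (Fin.castLE (Nat.le_add_right n' k)) id * T)) i l
        = (1 : Matrix (Fin m') (Fin m') (Module.End S N)) i l := by rw [hfin]
    rw [Matrix.mul_apply, Matrix.one_apply] at hentry
    have key : (∑ j : Fin n', B₀ i j ∘ₗ g (Fin.castLE (Nat.le_add_right n' k) j))
          ∘ₗ (∑ p, z p ∘ₗ T p l)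
        = ∑ j : Fin n', B₀ i j * (G.submatrix (Fin.castLE (Nat.le_add_right n' k)) id * T) j l := by
      ext v
      simp [Matrix.mul_apply, Matrix.submatrix_apply, hG, LinearMap.sum_apply,
        Module.End.mul_apply, map_sum, Finset.mul_sum]
      rfl
    rw [key, hentry]
    by_cases h : i = l <;> simp [h, Module.End.one_eq_id]
  refine ⟨fun i j => B₀ (Fin.cast heqm i) (Fin.cast heqn j),
    fun l => ∑ p, z p ∘ₗ T p (Fin.cast heqm l), ?_⟩
  intro i l
  have hsum : (∑ j : Fin (n' + k - k), B₀ (Fin.cast heqm i) (Fin.cast heqn j)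
        ∘ₗ g (Fin.castLE (by omega) j))
      = ∑ j : Fin n', B₀ (Fin.cast heqm i) j ∘ₗ g (Fin.castLE (Nat.le_add_right n' k) j) :=
    Fintype.sum_equiv (finCongr heqn) _ _ (fun j => rfl)
  simp only [hsum]
  rw [main (Fin.cast heqm i) (Fin.cast heqm l)]
  by_cases h : i = l
  · subst h; simp
  · rw [if_neg h, if_neg (fun hc => h (Fin.ext (by simpa using congrArg Fin.val hc)))]
end

section
/- Let N, L, M be right S-modules with E := End_S(N) and suppose N ⊕ L ≅ N ⊕ M via an isomorphism whose first row is (e, f_1) : N ⊕ M → N. If there exists f_0 ∈ Hom_S(M, N) such that f_1 + e∘f_0 is a split surjection M → N, then L ≅ M. -/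
/-- Upper shear automorphism of N × M : (n, m) ↦ (n + f m, m). -/
def ushear {S N M : Type*} [Ring S] [AddCommGroup N] [Module S N]
    [AddCommGroup M] [Module S M] (f : M →ₗ[S] N) : (N × M) ≃ₗ[S] (N × M) :=
  LinearEquiv.ofLinear
    (LinearMap.prod (LinearMap.fst S N M + f ∘ₗ LinearMap.snd S N M) (LinearMap.snd S N M))
    (LinearMap.prod (LinearMap.fst S N M - f ∘ₗ LinearMap.snd S N M) (LinearMap.snd S N M))
    (by apply LinearMap.ext; rintro ⟨n, m⟩; simp)
    (by apply LinearMap.ext; rintro ⟨n, m⟩; simp)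

/-- Lower shear automorphism of N × M : (n, m) ↦ (n, k n + m). -/
def lshear {S N M : Type*} [Ring S] [AddCommGroup N] [Module S N]
    [AddCommGroup M] [Module S M] (k : N →ₗ[S] M) : (N × M) ≃ₗ[S] (N × M) :=
  LinearEquiv.ofLinear
    (LinearMap.prod (LinearMap.fst S N M) (LinearMap.snd S N M + k ∘ₗ LinearMap.fst S N M))
    (LinearMap.prod (LinearMap.fst S N M) (LinearMap.snd S N M - k ∘ₗ LinearMap.fst S N M))
    (by apply LinearMap.ext; rintro ⟨n, m⟩; simp)
    (by apply LinearMap.ext; rintro ⟨n, m⟩; simp)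

lemma ushear_apply {S N M : Type*} [Ring S] [AddCommGroup N] [Module S N]
    [AddCommGroup M] [Module S M] (f : M →ₗ[S] N) (p : N × M) :
    ushear f p = (p.1 + f p.2, p.2) := rfl

lemma lshear_apply {S N M : Type*} [Ring S] [AddCommGroup N] [Module S N]
    [AddCommGroup M] [Module S M] (k : N →ₗ[S] M) (p : N × M) :
    lshear k p = (p.1, p.2 + k p.1) := rfl

/-- If an equivalence N × M ≃ N × L is the identity on the first coordinate,
then L ≃ M. -/
lemma cancel_of_fst_id {S N L M : Type*} [Ring S] [AddCommGroup N] [Module S N]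
    [AddCommGroup L] [Module S L] [AddCommGroup M] [Module S M]
    (ψ : (N × M) ≃ₗ[S] (N × L)) (hψ : ∀ p : N × M, (ψ p).1 = p.1) :
    Nonempty (L ≃ₗ[S] M) := by
  refine ⟨LinearEquiv.ofLinear
    (LinearMap.snd S N M ∘ₗ ψ.symm.toLinearMap ∘ₗ LinearMap.inr S N L)
    (LinearMap.snd S N L ∘ₗ ψ.toLinearMap ∘ₗ LinearMap.inr S N M) ?_ ?_⟩
  · apply LinearMap.ext; intro m
    have h2 : ψ (0, m) = (0, (ψ (0, m)).2) := Prod.ext (hψ (0, m)) rfl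
    simp only [LinearMap.comp_apply, LinearMap.inr_apply, LinearMap.snd_apply,
      LinearEquiv.coe_toLinearMap, LinearMap.id_apply]
    rw [h2.symm, LinearEquiv.symm_apply_apply]
  · apply LinearMap.ext; intro l
    have hψp : ψ (ψ.symm (0, l)) = (0, l) := ψ.apply_symm_apply (0, l)
    have hp1 : (ψ.symm (0, l)).1 = 0 := by
      have := hψ (ψ.symm (0, l)); rw [hψp] at this; exact this.symm
    have h3 : ((0 : N), (ψ.symm (0, l)).2) = ψ.symm (0, l) := Prod.ext hp1.symm rfl
    simp only [LinearMap.comp_apply, LinearMap.inr_apply, LinearMap.snd_apply,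
      LinearEquiv.coe_toLinearMap, LinearMap.id_apply]
    rw [h3, hψp]

/-- Final step of the Main Theorem: if φ : N ⊕ L ≅ N ⊕ M has first row (e, f₁)
and f₁ + e∘f₀ is a split surjection for some f₀ : M → N, then L ≅ M. -/
theorem cancel_of_split_perturbation (S : Type*) [Ring S]
    (N L M : Type*) [AddCommGroup N] [Module S N] [AddCommGroup L] [Module S L]
    [AddCommGroup M] [Module S M]
    (e : Module.End S N) (f₁ : M →ₗ[S] N)
    (φ : (N × M) ≃ₗ[S] (N × L))
    (hrow : ∀ (n : N) (m : M), (φ (n, m)).1 = e n + f₁ m)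
    (hsplit : ∃ f₀ : M →ₗ[S] N, ∃ g : N →ₗ[S] M,
      (f₁ + e ∘ₗ f₀) ∘ₗ g = LinearMap.id) :
    Nonempty (L ≃ₗ[S] M) := by
  obtain ⟨f₀, g, hg⟩ := hsplit
  obtain ⟨h, hh⟩ : ∃ h : M →ₗ[S] N, h = f₁ + e ∘ₗ f₀ := ⟨_, rfl⟩
  rw [← hh] at hg
  have key : ∀ z : N, f₁ (g z) + e (f₀ (g z)) = z := by
    intro z
    have := LinearMap.congr_fun hg z
    simpa [hh] using this
  have hm : ∀ m : M, f₁ m + e (f₀ m) = h m := by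
    intro m; simp [hh]
  refine cancel_of_fst_id
    ((((ushear (-h)).trans (lshear (g - g ∘ₗ e))).trans (ushear f₀)).trans φ) ?_
  rintro ⟨n, m⟩
  have expand :
      (((ushear (-h)).trans (lshear (g - g ∘ₗ e))).trans (ushear f₀)) (n, m)
      = (n - h m + f₀ (m + (g (n - h m) - g (e (n - h m)))),
          m + (g (n - h m) - g (e (n - h m)))) := by
    rw [LinearEquiv.trans_apply, LinearEquiv.trans_apply, ushear_apply, lshear_apply,
      ushear_apply]
    simp only [LinearMap.neg_apply, LinearMap.sub_apply, LinearMap.comp_apply]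
    rw [show n + -h m = n - h m from (sub_eq_add_neg n (h m)).symm]
  have step : (((((ushear (-h)).trans (lshear (g - g ∘ₗ e))).trans (ushear f₀)).trans φ)
      (n, m)).1
      = (φ ((((ushear (-h)).trans (lshear (g - g ∘ₗ e))).trans (ushear f₀)) (n, m))).1 := rfl
  rw [step, expand, hrow]
  obtain ⟨y, hy⟩ : ∃ y : M, y = m + (g (n - h m) - g (e (n - h m))) := ⟨_, rfl⟩
  rw [← hy]
  have hy' : f₁ y + e (f₀ y) = n - e n + e (h m) := by
    calc f₁ y + e (f₀ y)
        = (f₁ m + e (f₀ m)) + (f₁ (g (n - h m)) + e (f₀ (g (n - h m))))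
          - (f₁ (g (e (n - h m))) + e (f₀ (g (e (n - h m))))) := by
          simp only [hy, map_add, map_sub]; abel
      _ = h m + (n - h m) - e (n - h m) := by rw [key, key, hm]
      _ = n - e n + e (h m) := by simp only [map_sub]; abel
  have goal' : e n - e (h m) + (f₁ y + e (f₀ y)) = n := by rw [hy']; abel
  rw [map_add, map_sub]
  calc e n - e (h m) + e (f₀ y) + f₁ y
      = e n - e (h m) + (f₁ y + e (f₀ y)) := by abel
    _ = n := goal'
end
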